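/- Let k ≥ 2 and consider the recurrence a_n = a_{n-1} + a_{n-k} with a_i = 1 for i ≤ 0. For every positive integer N there exists a unique representation N = Σ_{i∈S} a_i where S is a finite set of nonnegative integers such that any two distinct elements of S differ by at least k. -/

import Mathlib

/-- for the recurrence `a_n = a_{n-1} + a_{n-k}` (with `k ≥ 2`
and `a_i = 1` for `i ≤ 0`), every positive integer `N` has a unique
representation `N = ∑_{i ∈ S} a_i` with `S` a finite set of nonnegative
integers any two distinct elements of which differ by at least `k`. -/
theorem stmt4 (k : ℕ) (hk : 2 ≤ k) (a : ℤ → ℤ)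
    (ha0 : ∀ i : ℤ, i ≤ 0 → a i = 1)
    (harec : ∀ n : ℤ, 1 ≤ n → a n = a (n - 1) + a (n - k)) :
    ∀ N : ℕ, 1 ≤ N → ∃! S : Finset ℕ,
      (N : ℤ) = ∑ i ∈ S, a i ∧
      ∀ i ∈ S, ∀ j ∈ S, i ≠ j → (k : ℤ) ≤ |(i : ℤ) - (j : ℤ)| := by
  -- positivity of a
  have apos : ∀ n : ℤ, 1 ≤ a n := by
    have key : ∀ m : ℕ, ∀ n : ℤ, n ≤ (m : ℤ) → 1 ≤ a n := by
      intro m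
      induction m with
      | zero =>
        intro n hn
        rw [ha0 n (by exact_mod_cast hn)]
      | succ m ih =>
        intro n hn
        rcases le_or_gt n 0 with h | h
        · rw [ha0 n h]
        · rw [harec n h]
          have h1 := ih (n - 1) (by omega)
          have h2 := ih (n - k) (by omega)
          omega
    intro n
    rcases le_or_gt n 0 with h | h
    · rw [ha0 n h]
    · exact key n.toNat n (by omega)
  -- recursion at natural indices
  have hf1 : ∀ n : ℕ, a ((n : ℤ) + 1) = a (n : ℤ) + a ((n : ℤ) + 1 - k) := by
    intro n
    have := harec ((n : ℤ) + 1) (by omega)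
    simpa using this
  -- strict monotonicity on ℕ
  have fmono : StrictMono (fun n : ℕ => a (n : ℤ)) := by
    apply strictMono_nat_of_lt_succ
    intro n
    have h1 := hf1 n
    have h2 := apos ((n : ℤ) + 1 - k)
    have : ((n + 1 : ℕ) : ℤ) = (n : ℤ) + 1 := by push_cast; ring
    rw [this]
    omega
  -- growth: a n ≥ n + 1
  have fge : ∀ n : ℕ, (n : ℤ) + 1 ≤ a (n : ℤ) := by
    intro n
    induction n with
    | zero => simp [ha0 0 le_rfl]
    | succ n ih =>
      have := fmono (Nat.lt_succ_self n)
      push_cast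
      push_cast at this
      omega
  -- key bound: a representation with all indices ≤ m sums to at most a(m+1) - 1
  have bound : ∀ m : ℕ, ∀ S : Finset ℕ,
      (∀ i ∈ S, ∀ j ∈ S, i ≠ j → (k : ℤ) ≤ |(i : ℤ) - (j : ℤ)|) →
      (∀ i ∈ S, i ≤ m) → ∑ i ∈ S, a (i : ℤ) ≤ a ((m + 1 : ℕ) : ℤ) - 1 := by
    intro m
    induction m using Nat.strong_induction_on with
    | _ m ih =>
      intro S hsp hle
      rcases S.eq_empty_or_nonempty with rfl | hne
      · simp
        exact apos _
      · set M := S.max' hne with hM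
        have hMmem : M ∈ S := S.max'_mem hne
        have hMle : M ≤ m := hle M hMmem
        have hsum : ∑ i ∈ S, a (i : ℤ) = a (M : ℤ) + ∑ i ∈ S.erase M, a (i : ℤ) :=
          (Finset.add_sum_erase S _ hMmem).symm
        have herase : ∀ i ∈ S.erase M, i + k ≤ M := by
          intro i hi
          have hiS := Finset.mem_of_mem_erase hi
          have hne' : i ≠ M := Finset.ne_of_mem_erase hi
          have h1 := hsp i hiS M hMmem hne'
          have hle' : i ≤ M := S.le_max' i hiS
          have hlt : i < M := lt_of_le_of_ne hle' hne'
          rw [abs_of_nonpos (by push_cast; omega)] at h1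
          omega
        rcases Finset.eq_empty_or_nonempty (S.erase M) with he | hne2
        · rw [hsum, he, Finset.sum_empty, add_zero]
          have := fmono (show M < m + 1 by omega)
          simp only at this
          omega
        · obtain ⟨j, hj⟩ := hne2
          have hkM : k ≤ M := by have := herase j hj; omega
          have hb := ih (M - k) (by omega) (S.erase M)
            (fun i hi j hj hij => hsp i (Finset.mem_of_mem_erase hi) j
              (Finset.mem_of_mem_erase hj) hij)
            (fun i hi => by have := herase i hi; omega)
          have hcast : ((M - k + 1 : ℕ) : ℤ) = (M : ℤ) + 1 - k := by omega
          have hrec : a ((M + 1 : ℕ) : ℤ) = a (M : ℤ) + a ((M - k + 1 : ℕ) : ℤ) := by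
            have h1 := hf1 M
            rw [hcast]
            rw [show ((M + 1 : ℕ) : ℤ) = (M : ℤ) + 1 by push_cast; ring]
            exact h1
          have hmono2 : a ((M + 1 : ℕ) : ℤ) ≤ a ((m + 1 : ℕ) : ℤ) :=
            fmono.monotone (show M + 1 ≤ m + 1 by omega)
          omega
  -- greedy index
  have exists_greedy : ∀ N : ℕ, 1 ≤ N → ∃ m : ℕ,
      a (m : ℤ) ≤ (N : ℤ) ∧ (N : ℤ) < a ((m + 1 : ℕ) : ℤ) := by
    intro N hN
    classical
    set T := (Finset.range (N + 1)).filter (fun n : ℕ => a (n : ℤ) ≤ (N : ℤ)) with hT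
    have h0 : 0 ∈ T := by
      simp [hT, Finset.mem_filter, ha0 0 le_rfl]
      omega
    have hTne : T.Nonempty := ⟨0, h0⟩
    refine ⟨T.max' hTne, ?_, ?_⟩
    · exact (Finset.mem_filter.mp (T.max'_mem hTne)).2
    · by_contra h
      push_neg at h
      have hle2 : T.max' hTne + 1 ≤ N := by
        have h2 := h
        have := fge (T.max' hTne + 1)
        push_cast at this h2
        omega
      have hmem : T.max' hTne + 1 ∈ T :=
        Finset.mem_filter.mpr ⟨Finset.mem_range.mpr (by omega), h⟩
      have := T.le_max' _ hmem
      omega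
  -- existence
  have exist : ∀ N : ℕ, 1 ≤ N → ∃ S : Finset ℕ,
      (N : ℤ) = ∑ i ∈ S, a (i : ℤ) ∧
      (∀ i ∈ S, ∀ j ∈ S, i ≠ j → (k : ℤ) ≤ |(i : ℤ) - (j : ℤ)|) ∧
      (∀ i ∈ S, a (i : ℤ) ≤ (N : ℤ)) := by
    intro N
    induction N using Nat.strong_induction_on with
    | _ N ih =>
      intro hN
      obtain ⟨m, hm1, hm2⟩ := exists_greedy N hN
      have hfm1 : 1 ≤ a (m : ℤ) := apos _
      set N' : ℕ := N - (a (m : ℤ)).toNat with hN'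
      have htn : ((a (m : ℤ)).toNat : ℤ) = a (m : ℤ) := Int.toNat_of_nonneg (by omega)
      have hNeq : (N' : ℤ) = (N : ℤ) - a (m : ℤ) := by
        rw [hN']; push_cast; omega
      rcases Nat.eq_zero_or_pos N' with h0 | h1
      · refine ⟨{m}, ?_, ?_, ?_⟩
        · simp
          omega
        · intro i hi j hj hij
          simp at hi hj
          subst hi; subst hj; exact absurd rfl hij
        · intro i hi
          simp at hi
          subst hi; exact hm1
      · have hN'lt : N' < N := by omega
        obtain ⟨S', hs1, hs2, hs3⟩ := ih N' hN'lt h1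
        have hlt : (N' : ℤ) < a ((m : ℤ) + 1 - k) := by
          have := hf1 m
          rw [show ((m + 1 : ℕ) : ℤ) = (m : ℤ) + 1 by push_cast; ring] at hm2
          omega
        have hmk : k ≤ m := by
          by_contra h
          push_neg at h
          have : a ((m : ℤ) + 1 - k) = 1 := ha0 _ (by omega)
          omega
        have hcast : ((m - k + 1 : ℕ) : ℤ) = (m : ℤ) + 1 - k := by omega
        have hlt2 : (N' : ℤ) < a ((m - k + 1 : ℕ) : ℤ) := by rw [hcast]; exact hlt
        have helem : ∀ i ∈ S', i + k ≤ m := by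
          intro i hi
          have h4 := hs3 i hi
          have h5 : a (i : ℤ) < a ((m - k + 1 : ℕ) : ℤ) := by omega
          have h6 : i < m - k + 1 := by
            by_contra hcon
            push_neg at hcon
            have := fmono.monotone hcon
            omega
          omega
        have hmnot : m ∉ S' := fun h => by have := helem m h; omega
        refine ⟨insert m S', ?_, ?_, ?_⟩
        · rw [Finset.sum_insert hmnot, ← hs1]
          omega
        · intro i hi j hj hij
          rw [Finset.mem_insert] at hi hj
          rcases hi with rfl | hi <;> rcases hj with rfl | hj
          · exact absurd rfl hij
          · have := helem j hj
            rw [abs_of_nonneg (by push_cast; omega)]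
            push_cast; omega
          · have := helem i hi
            rw [abs_of_nonpos (by push_cast; omega)]
            push_cast; omega
          · exact hs2 i hi j hj hij
        · intro i hi
          rw [Finset.mem_insert] at hi
          rcases hi with rfl | hi
          · exact hm1
          · have := hs3 i hi; omega
  -- uniqueness
  have uniq : ∀ N : ℕ, ∀ S T : Finset ℕ,
      (∀ i ∈ S, ∀ j ∈ S, i ≠ j → (k : ℤ) ≤ |(i : ℤ) - (j : ℤ)|) →
      (∀ i ∈ T, ∀ j ∈ T, i ≠ j → (k : ℤ) ≤ |(i : ℤ) - (j : ℤ)|) →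
      (N : ℤ) = ∑ i ∈ S, a (i : ℤ) → (N : ℤ) = ∑ i ∈ T, a (i : ℤ) → S = T := by
    intro N
    induction N using Nat.strong_induction_on with
    | _ N ih =>
      intro S T hS hT hsS hsT
      have hempty : ∀ U : Finset ℕ, (0 : ℤ) = ∑ i ∈ U, a (i : ℤ) → U = ∅ := by
        intro U h
        have hcard : (U.card : ℤ) * 1 ≤ ∑ i ∈ U, a (i : ℤ) := by
          have := Finset.card_nsmul_le_sum U (fun i => a (i : ℤ)) 1
            (fun i _ => apos (i : ℤ))
          simpa [nsmul_eq_mul] using this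
        have : U.card = 0 := by omega
        exact Finset.card_eq_zero.mp this
      rcases Nat.eq_zero_or_pos N with rfl | hN
      · rw [hempty S (by exact_mod_cast hsS), hempty T (by exact_mod_cast hsT)]
      · have hSne : S.Nonempty := by
          rcases S.eq_empty_or_nonempty with rfl | h
          · simp at hsS; omega
          · exact h
        have hTne : T.Nonempty := by
          rcases T.eq_empty_or_nonempty with rfl | h
          · simp at hsT; omega
          · exact h
        set M := S.max' hSne with hM
        set M' := T.max' hTne with hM'
        have hb1 : (N : ℤ) ≤ a ((M + 1 : ℕ) : ℤ) - 1 := by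
          rw [hsS]; exact bound M S hS (fun i hi => S.le_max' i hi)
        have hb2 : (N : ℤ) ≤ a ((M' + 1 : ℕ) : ℤ) - 1 := by
          rw [hsT]; exact bound M' T hT (fun i hi => T.le_max' i hi)
        have hnn : ∀ i : ℕ, (0 : ℤ) ≤ a (i : ℤ) := fun i => le_trans zero_le_one (apos _)
        have hl1 : a (M : ℤ) ≤ (N : ℤ) := by
          rw [hsS]
          exact Finset.single_le_sum (fun i _ => hnn i) (S.max'_mem hSne)
        have hl2 : a (M' : ℤ) ≤ (N : ℤ) := by
          rw [hsT]
          exact Finset.single_le_sum (fun i _ => hnn i) (T.max'_mem hTne)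
        have hMM : M = M' := by
          by_contra h
          rcases Nat.lt_or_ge M M' with hlt | hge
          · have := fmono.monotone (show M + 1 ≤ M' by omega)
            omega
          · have hlt : M' < M := by omega
            have := fmono.monotone (show M' + 1 ≤ M by omega)
            omega
        have hfM1 : 1 ≤ a (M : ℤ) := apos _
        set N'' : ℕ := N - (a (M : ℤ)).toNat with hN''
        have htn : ((a (M : ℤ)).toNat : ℤ) = a (M : ℤ) := Int.toNat_of_nonneg (by omega)
        have hNeq : (N'' : ℤ) = (N : ℤ) - a (M : ℤ) := by omega
        have hsum1 : (N'' : ℤ) = ∑ i ∈ S.erase M, a (i : ℤ) := by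
          have h5 := Finset.add_sum_erase S (fun i : ℕ => a (i : ℤ)) (S.max'_mem hSne)
          rw [← hM] at h5
          omega
        have hsum2 : (N'' : ℤ) = ∑ i ∈ T.erase M, a (i : ℤ) := by
          have hmem : M ∈ T := hMM ▸ (T.max'_mem hTne)
          have h5 := Finset.add_sum_erase T (fun i : ℕ => a (i : ℤ)) hmem
          omega
        have hN''lt : N'' < N := by omega
        have heq := ih N'' hN''lt (S.erase M) (T.erase M)
          (fun i hi j hj hij => hS i (Finset.mem_of_mem_erase hi) j
            (Finset.mem_of_mem_erase hj) hij)
          (fun i hi j hj hij => hT i (Finset.mem_of_mem_erase hi) j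
            (Finset.mem_of_mem_erase hj) hij)
          hsum1 hsum2
        have hmemT : M ∈ T := hMM ▸ (T.max'_mem hTne)
        calc S = insert M (S.erase M) := (Finset.insert_erase (S.max'_mem hSne)).symm
          _ = insert M (T.erase M) := by rw [heq]
          _ = T := Finset.insert_erase hmemT
  intro N hN
  obtain ⟨S, h1, h2, _⟩ := exist N hN
  refine ⟨S, ⟨h1, h2⟩, ?_⟩
  rintro T ⟨g1, g2⟩
  exact uniq N T S g2 h2 g1 h1
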